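/- Let u, φ : ℝ → ℝ be three times continuously differentiable and fix x̄ ∈ ℝ. For Δ > 0 define the Wicker–Skamarock fourth-order flux F(x; Δ) = (u(x)/12)·[7(φ(x + Δ/2) + φ(x − Δ/2)) − (φ(x + 3Δ/2) + φ(x − 3Δ/2))]. Then, as Δ → 0⁺, (F(x̄ + Δ/2; Δ) − F(x̄ − Δ/2; Δ))/Δ = (u·φ)'(x̄) + O(Δ²); i.e., the function Δ ↦ (F(x̄ + Δ/2; Δ) − F(x̄ − Δ/2; Δ))/Δ − (u(x̄)φ(x̄))' is O(Δ²) in the limit Δ → 0⁺, where (u·φ)'(x̄) = u'(x̄)φ(x̄) + u(x̄)φ'(x̄). -/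

import Mathlib

open Asymptotics Filter Set



private lemma abs_le_of_between {y t : ℝ} (h1 : min 0 t ≤ y) (h2 : y ≤ max 0 t) : |y| ≤ |t| := by
  rcases le_total 0 t with hpos | hneg
  · rw [min_eq_left hpos] at h1
    rw [max_eq_right hpos] at h2
    rw [abs_of_nonneg h1, abs_of_nonneg hpos]; exact h2
  · rw [min_eq_right hneg] at h1
    rw [max_eq_left hneg] at h2
    rw [abs_of_nonpos h2, abs_of_nonpos hneg]; linarith

/-- Third-order Taylor estimate for a `C³` function. -/
lemma taylor3_isBigO (f : ℝ → ℝ) (hf : ContDiff ℝ 3 f) (x₀ : ℝ) :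
    (fun h : ℝ => f (x₀ + h) - f x₀ - deriv f x₀ * h - deriv (deriv f) x₀ / 2 * h ^ 2)
      =O[nhds 0] (fun h : ℝ => h ^ 3) := by
  have h3 : ContDiff ℝ ((2 : ℕ) + 1) f := by exact_mod_cast hf
  rw [contDiff_succ_iff_deriv] at h3
  have hdf : Differentiable ℝ f := h3.1
  have h2 : ContDiff ℝ ((1 : ℕ) + 1) (deriv f) := by exact_mod_cast h3.2.2
  rw [contDiff_succ_iff_deriv] at h2
  have hdf1 : Differentiable ℝ (deriv f) := h2.1
  have h1 : ContDiff ℝ ((0 : ℕ) + 1) (deriv (deriv f)) := by exact_mod_cast h2.2.2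
  rw [contDiff_succ_iff_deriv] at h1
  have hdf2 : Differentiable ℝ (deriv (deriv f)) := h1.1
  have hcont3 : Continuous (deriv (deriv (deriv f))) := h1.2.2.continuous
  obtain ⟨M, hM⟩ := (isCompact_Icc (a := x₀ - 1) (b := x₀ + 1)).exists_bound_of_continuousOn
    hcont3.continuousOn
  have hM0 : 0 ≤ M := le_trans (norm_nonneg _) (hM x₀ (by constructor <;> linarith))
  -- Step A: bound on the second derivative increment
  have stepA : ∀ t : ℝ, |t| ≤ 1 → |deriv (deriv f) (x₀ + t) - deriv (deriv f) x₀| ≤ M * |t| := by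
    intro t ht
    have habs := abs_le.mp ht
    have hs : Convex ℝ (Icc (x₀ - 1) (x₀ + 1)) := convex_Icc _ _
    have := hs.norm_image_sub_le_of_norm_hasDerivWithin_le
      (f := deriv (deriv f)) (f' := deriv (deriv (deriv f)))
      (fun y hy => ((hdf2 y).hasDerivAt).hasDerivWithinAt)
      (fun y hy => hM y hy)
      (x := x₀) (y := x₀ + t) (by constructor <;> linarith) (by constructor <;> linarith)
    simpa [Real.norm_eq_abs, abs_sub_comm] using this
  -- Step B: bound on the first derivative increment
  have stepB : ∀ t : ℝ, |t| ≤ 1 →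
      |deriv f (x₀ + t) - deriv f x₀ - deriv (deriv f) x₀ * t| ≤ M * |t| ^ 2 := by
    intro t ht
    have habs := abs_le.mp ht
    set g : ℝ → ℝ := fun s => deriv f (x₀ + s) - deriv f x₀ - deriv (deriv f) x₀ * s with hg
    have hg' : ∀ s : ℝ, HasDerivAt g (deriv (deriv f) (x₀ + s) - deriv (deriv f) x₀) s := by
      intro s
      have h1 : HasDerivAt (fun s : ℝ => deriv f (x₀ + s)) (deriv (deriv f) (x₀ + s)) s := by
        have := ((hdf1 (x₀ + s)).hasDerivAt).comp s
          ((hasDerivAt_id s).const_add x₀)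
        exact this.congr_deriv (by ring)
      exact ((h1.sub_const (deriv f x₀)).sub
        ((hasDerivAt_id s).const_mul (deriv (deriv f) x₀))).congr_deriv (by ring)
    have hs : Convex ℝ (Icc (min 0 t) (max 0 t)) := convex_Icc _ _
    have hmem0 : (0 : ℝ) ∈ Icc (min 0 t) (max 0 t) := ⟨min_le_left _ _, le_max_left _ _⟩
    have hmemt : t ∈ Icc (min 0 t) (max 0 t) := ⟨min_le_right _ _, le_max_right _ _⟩
    have hb : ∀ y ∈ Icc (min 0 t) (max 0 t),
        ‖deriv (deriv f) (x₀ + y) - deriv (deriv f) x₀‖ ≤ M * |t| := by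
      intro y hy
      have hyabs : |y| ≤ |t| := abs_le_of_between hy.1 hy.2
      have := stepA y (le_trans hyabs ht)
      rw [Real.norm_eq_abs]
      calc |deriv (deriv f) (x₀ + y) - deriv (deriv f) x₀| ≤ M * |y| := this
        _ ≤ M * |t| := by gcongr
    have := hs.norm_image_sub_le_of_norm_hasDerivWithin_le
      (fun y _ => (hg' y).hasDerivWithinAt) hb hmem0 hmemt
    have hgz : g 0 = 0 := by simp [hg]
    rw [hgz, sub_zero, sub_zero, Real.norm_eq_abs, Real.norm_eq_abs] at this
    calc |g t| ≤ M * |t| * |t| := this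
      _ = M * |t| ^ 2 := by ring
  -- Step C: bound on the function increment
  have stepC : ∀ t : ℝ, |t| ≤ 1 →
      |f (x₀ + t) - f x₀ - deriv f x₀ * t - deriv (deriv f) x₀ / 2 * t ^ 2| ≤ M * |t| ^ 3 := by
    intro t ht
    set g : ℝ → ℝ := fun s =>
      f (x₀ + s) - f x₀ - deriv f x₀ * s - deriv (deriv f) x₀ / 2 * s ^ 2 with hg
    have hg' : ∀ s : ℝ, HasDerivAt g
        (deriv f (x₀ + s) - deriv f x₀ - deriv (deriv f) x₀ * s) s := by
      intro s
      have h1 : HasDerivAt (fun s : ℝ => f (x₀ + s)) (deriv f (x₀ + s)) s := by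
        have := ((hdf (x₀ + s)).hasDerivAt).comp s ((hasDerivAt_id s).const_add x₀)
        exact this.congr_deriv (by ring)
      have h2 : HasDerivAt (fun s : ℝ => deriv (deriv f) x₀ / 2 * s ^ 2)
          (deriv (deriv f) x₀ * s) s := by
        have := (hasDerivAt_pow 2 s).const_mul (deriv (deriv f) x₀ / 2)
        simpa using this.congr_deriv (by ring)
      exact (((h1.sub_const (f x₀)).sub
        ((hasDerivAt_id s).const_mul (deriv f x₀))).sub h2).congr_deriv (by ring)
    have hs : Convex ℝ (Icc (min 0 t) (max 0 t)) := convex_Icc _ _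
    have hmem0 : (0 : ℝ) ∈ Icc (min 0 t) (max 0 t) := ⟨min_le_left _ _, le_max_left _ _⟩
    have hmemt : t ∈ Icc (min 0 t) (max 0 t) := ⟨min_le_right _ _, le_max_right _ _⟩
    have hb : ∀ y ∈ Icc (min 0 t) (max 0 t),
        ‖deriv f (x₀ + y) - deriv f x₀ - deriv (deriv f) x₀ * y‖ ≤ M * |t| ^ 2 := by
      intro y hy
      have hyabs : |y| ≤ |t| := abs_le_of_between hy.1 hy.2
      have := stepB y (le_trans hyabs ht)
      rw [Real.norm_eq_abs]
      calc |deriv f (x₀ + y) - deriv f x₀ - deriv (deriv f) x₀ * y| ≤ M * |y| ^ 2 := this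
        _ ≤ M * |t| ^ 2 := by gcongr
    have := hs.norm_image_sub_le_of_norm_hasDerivWithin_le
      (fun y _ => (hg' y).hasDerivWithinAt) hb hmem0 hmemt
    have hgz : g 0 = 0 := by simp [hg]
    rw [hgz, sub_zero, sub_zero, Real.norm_eq_abs, Real.norm_eq_abs] at this
    calc |g t| ≤ M * |t| ^ 2 * |t| := this
      _ = M * |t| ^ 3 := by ring
  -- conclude
  rw [Asymptotics.isBigO_iff]
  refine ⟨M, ?_⟩
  have hev : ∀ᶠ h : ℝ in nhds 0, |h| ≤ 1 := by
    filter_upwards [Metric.ball_mem_nhds (0 : ℝ) one_pos] with h hh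
    simp only [Metric.mem_ball, Real.dist_eq, sub_zero] at hh
    exact hh.le
  filter_upwards [hev] with h hh
  rw [Real.norm_eq_abs, Real.norm_eq_abs, abs_pow]
  exact stepC h hh

set_option maxHeartbeats 1000000 in
lemma ws_key (u φ : ℝ → ℝ) (hu : ContDiff ℝ 3 u) (hφ : ContDiff ℝ 3 φ) (x₀ : ℝ) :
    (fun Δ : ℝ =>
      u (x₀ + Δ / 2) * (7 * (φ (x₀ + Δ) + φ x₀) - (φ (x₀ + 2 * Δ) + φ (x₀ - Δ)))
      - u (x₀ - Δ / 2) * (7 * (φ x₀ + φ (x₀ - Δ)) - (φ (x₀ + Δ) + φ (x₀ - 2 * Δ)))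
      - 12 * (deriv u x₀ * φ x₀ + u x₀ * deriv φ x₀) * Δ)
      =O[nhds 0] (fun Δ : ℝ => Δ ^ 3) := by
  have hEu := taylor3_isBigO u hu x₀
  have hEp := taylor3_isBigO φ hφ x₀
  set Eu : ℝ → ℝ := fun h =>
    u (x₀ + h) - u x₀ - deriv u x₀ * h - deriv (deriv u) x₀ / 2 * h ^ 2 with hEu_def
  set Ep : ℝ → ℝ := fun h =>
    φ (x₀ + h) - φ x₀ - deriv φ x₀ * h - deriv (deriv φ) x₀ / 2 * h ^ 2 with hEp_def
  have hcomp : ∀ (E : ℝ → ℝ), (E =O[nhds (0 : ℝ)] fun h => h ^ 3) →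
      ∀ (g : ℝ → ℝ) (a : ℝ), (∀ Δ, g Δ = a * Δ) →
      (fun Δ => E (g Δ)) =O[nhds (0 : ℝ)] fun Δ => Δ ^ 3 := by
    intro E hE g a hg
    have hgl : g = fun Δ => a * Δ := funext hg
    have ht : Tendsto g (nhds 0) (nhds 0) := by
      rw [hgl]
      exact (continuous_const.mul continuous_id).tendsto' (0 : ℝ) 0 (by simp)
    have h1 := hE.comp_tendsto ht
    have h2 : (fun Δ : ℝ => (g Δ) ^ 3) =O[nhds 0] fun Δ => Δ ^ 3 := by
      have he : (fun Δ : ℝ => (g Δ) ^ 3) = fun Δ => a ^ 3 * Δ ^ 3 := by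
        funext Δ; rw [hg]; ring
      rw [he]
      exact (isBigO_refl (fun Δ : ℝ => Δ ^ 3) _).const_mul_left _
    exact h1.trans h2
  -- error pieces
  have hA : (fun Δ : ℝ => Eu (Δ / 2)) =O[nhds 0] fun Δ => Δ ^ 3 :=
    hcomp Eu hEu (fun Δ => Δ / 2) (1 / 2) (fun Δ => by ring)
  have hA' : (fun Δ : ℝ => Eu (-(Δ / 2))) =O[nhds 0] fun Δ => Δ ^ 3 :=
    hcomp Eu hEu (fun Δ => -(Δ / 2)) (-(1 / 2)) (fun Δ => by ring)
  have hB1 : (fun Δ : ℝ => Ep Δ) =O[nhds 0] fun Δ => Δ ^ 3 :=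
    hcomp Ep hEp (fun Δ => Δ) 1 (fun Δ => by ring)
  have hB2 : (fun Δ : ℝ => Ep (2 * Δ)) =O[nhds 0] fun Δ => Δ ^ 3 :=
    hcomp Ep hEp (fun Δ => 2 * Δ) 2 (fun Δ => by ring)
  have hB3 : (fun Δ : ℝ => Ep (-Δ)) =O[nhds 0] fun Δ => Δ ^ 3 :=
    hcomp Ep hEp (fun Δ => -Δ) (-1) (fun Δ => by ring)
  have hB4 : (fun Δ : ℝ => Ep (-(2 * Δ))) =O[nhds 0] fun Δ => Δ ^ 3 :=
    hcomp Ep hEp (fun Δ => -(2 * Δ)) (-2) (fun Δ => by ring)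
  have heQ : (fun Δ : ℝ => 7 * Ep Δ - Ep (2 * Δ) - Ep (-Δ)) =O[nhds 0] fun Δ => Δ ^ 3 :=
    ((hB1.const_mul_left 7).sub hB2).sub hB3
  have heQ' : (fun Δ : ℝ => 7 * Ep (-Δ) - Ep Δ - Ep (-(2 * Δ))) =O[nhds 0] fun Δ => Δ ^ 3 :=
    ((hB3.const_mul_left 7).sub hB1).sub hB4
  -- bounded pieces
  have hAa : (fun Δ : ℝ => u x₀ + deriv u x₀ * (Δ / 2) + deriv (deriv u) x₀ / 2 * (Δ / 2) ^ 2)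
      =O[nhds 0] (fun _ : ℝ => (1 : ℝ)) := by
    have : Continuous fun Δ : ℝ =>
        u x₀ + deriv u x₀ * (Δ / 2) + deriv (deriv u) x₀ / 2 * (Δ / 2) ^ 2 := by fun_prop
    exact (this.tendsto 0).isBigO_one ℝ
  have hAa' : (fun Δ : ℝ => u x₀ + deriv u x₀ * (-(Δ / 2)) + deriv (deriv u) x₀ / 2 * (-(Δ / 2)) ^ 2)
      =O[nhds 0] (fun _ : ℝ => (1 : ℝ)) := by
    have : Continuous fun Δ : ℝ =>
        u x₀ + deriv u x₀ * (-(Δ / 2)) + deriv (deriv u) x₀ / 2 * (-(Δ / 2)) ^ 2 := by fun_prop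
    exact (this.tendsto 0).isBigO_one ℝ
  have hBr1 : (fun Δ : ℝ => 7 * (φ (x₀ + Δ) + φ x₀) - (φ (x₀ + 2 * Δ) + φ (x₀ - Δ)))
      =O[nhds 0] (fun _ : ℝ => (1 : ℝ)) := by
    have hc := hφ.continuous
    have : Continuous fun Δ : ℝ =>
        7 * (φ (x₀ + Δ) + φ x₀) - (φ (x₀ + 2 * Δ) + φ (x₀ - Δ)) := by fun_prop
    exact (this.tendsto 0).isBigO_one ℝ
  have hBr2 : (fun Δ : ℝ => 7 * (φ x₀ + φ (x₀ - Δ)) - (φ (x₀ + Δ) + φ (x₀ - 2 * Δ)))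
      =O[nhds 0] (fun _ : ℝ => (1 : ℝ)) := by
    have hc := hφ.continuous
    have : Continuous fun Δ : ℝ =>
        7 * (φ x₀ + φ (x₀ - Δ)) - (φ (x₀ + Δ) + φ (x₀ - 2 * Δ)) := by fun_prop
    exact (this.tendsto 0).isBigO_one ℝ
  -- the five O(Δ³) summands
  have hmul : ∀ {f g : ℝ → ℝ}, (f =O[nhds (0:ℝ)] fun _ => (1:ℝ)) →
      (g =O[nhds (0:ℝ)] fun Δ => Δ ^ 3) → (fun Δ => f Δ * g Δ) =O[nhds (0:ℝ)] fun Δ => Δ ^ 3 := by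
    intro f g hf hg
    have := hf.mul hg
    simpa using this
  have hT1 : (fun Δ : ℝ => (deriv (deriv φ) x₀ * deriv u x₀
      + 3 / 2 * deriv φ x₀ * deriv (deriv u) x₀) * Δ ^ 3) =O[nhds 0] fun Δ : ℝ => Δ ^ 3 :=
    (isBigO_refl (fun Δ : ℝ => Δ ^ 3) _).const_mul_left _
  have hT2 := hmul hAa heQ
  have hT3 := hmul hAa' heQ'
  have hT4 := hmul hBr1 hA
  have hT5 := hmul hBr2 hA'
  have hsum := (((hT1.add hT2).sub hT3).add hT4).sub hT5
  -- identify the target with the sum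
  have hid : (fun Δ : ℝ =>
      u (x₀ + Δ / 2) * (7 * (φ (x₀ + Δ) + φ x₀) - (φ (x₀ + 2 * Δ) + φ (x₀ - Δ)))
      - u (x₀ - Δ / 2) * (7 * (φ x₀ + φ (x₀ - Δ)) - (φ (x₀ + Δ) + φ (x₀ - 2 * Δ)))
      - 12 * (deriv u x₀ * φ x₀ + u x₀ * deriv φ x₀) * Δ) = (fun Δ : ℝ =>
        (deriv (deriv φ) x₀ * deriv u x₀ + 3 / 2 * deriv φ x₀ * deriv (deriv u) x₀) * Δ ^ 3
        + (u x₀ + deriv u x₀ * (Δ / 2) + deriv (deriv u) x₀ / 2 * (Δ / 2) ^ 2)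
            * (7 * Ep Δ - Ep (2 * Δ) - Ep (-Δ))
        - (u x₀ + deriv u x₀ * (-(Δ / 2)) + deriv (deriv u) x₀ / 2 * (-(Δ / 2)) ^ 2)
            * (7 * Ep (-Δ) - Ep Δ - Ep (-(2 * Δ)))
        + (7 * (φ (x₀ + Δ) + φ x₀) - (φ (x₀ + 2 * Δ) + φ (x₀ - Δ))) * Eu (Δ / 2)
        - (7 * (φ x₀ + φ (x₀ - Δ)) - (φ (x₀ + Δ) + φ (x₀ - 2 * Δ))) * Eu (-(Δ / 2))) := by
    funext Δ
    simp only [hEu_def, hEp_def]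
    have e1 : x₀ + -(Δ / 2) = x₀ - Δ / 2 := by ring
    have e2 : x₀ + -Δ = x₀ - Δ := by ring
    have e3 : x₀ + -(2 * Δ) = x₀ - 2 * Δ := by ring
    rw [e1, e2, e3]
    ring
  rw [hid]
  exact hsum



open Asymptotics

/-- (Theorem A.1 of the paper.) Let `u, φ : ℝ → ℝ` be three times
continuously differentiable and fix `x₀ = x̄`. With the fourth-order Wicker–Skamarock flux
`F(x; Δ) = (u(x)/12)·[7(φ(x+Δ/2) + φ(x−Δ/2)) − (φ(x+3Δ/2) + φ(x−3Δ/2))]`, as `Δ → 0⁺`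
the flux difference `(F(x̄+Δ/2; Δ) − F(x̄−Δ/2; Δ))/Δ` equals `(uφ)'(x̄) + O(Δ²)`. -/
theorem wicker_skamarock_second_order (u φ : ℝ → ℝ)
    (hu : ContDiff ℝ 3 u) (hφ : ContDiff ℝ 3 φ) (x₀ : ℝ)
    (F : ℝ → ℝ → ℝ)
    (hF : ∀ x Δ, F x Δ = u x / 12 *
      (7 * (φ (x + Δ / 2) + φ (x - Δ / 2)) - (φ (x + 3 * Δ / 2) + φ (x - 3 * Δ / 2)))) :
    (fun Δ : ℝ => (F (x₀ + Δ / 2) Δ - F (x₀ - Δ / 2) Δ) / Δ -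
        (deriv u x₀ * φ x₀ + u x₀ * deriv φ x₀)) =O[nhdsWithin 0 (Set.Ioi 0)]
      (fun Δ : ℝ => Δ ^ 2) := by
  obtain ⟨C, hC⟩ := (ws_key u φ hu hφ x₀).bound
  rw [isBigO_iff]
  refine ⟨C / 12, ?_⟩
  filter_upwards [hC.filter_mono nhdsWithin_le_nhds, self_mem_nhdsWithin] with Δ hΔ hpos
  simp only [mem_Ioi] at hpos
  have hne : Δ ≠ 0 := ne_of_gt hpos
  rw [hF, hF]
  have e1 : x₀ + Δ / 2 + Δ / 2 = x₀ + Δ := by ring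
  have e2 : x₀ + Δ / 2 - Δ / 2 = x₀ := by ring
  have e3 : x₀ + Δ / 2 + 3 * Δ / 2 = x₀ + 2 * Δ := by ring
  have e4 : x₀ + Δ / 2 - 3 * Δ / 2 = x₀ - Δ := by ring
  have e5 : x₀ - Δ / 2 + Δ / 2 = x₀ := by ring
  have e6 : x₀ - Δ / 2 - Δ / 2 = x₀ - Δ := by ring
  have e7 : x₀ - Δ / 2 + 3 * Δ / 2 = x₀ + Δ := by ring
  have e8 : x₀ - Δ / 2 - 3 * Δ / 2 = x₀ - 2 * Δ := by ring
  rw [e1, e2, e3, e4, e5, e6, e7, e8]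
  have hkey : (u (x₀ + Δ / 2) / 12 * (7 * (φ (x₀ + Δ) + φ x₀) - (φ (x₀ + 2 * Δ) + φ (x₀ - Δ)))
      - u (x₀ - Δ / 2) / 12 * (7 * (φ x₀ + φ (x₀ - Δ)) - (φ (x₀ + Δ) + φ (x₀ - 2 * Δ)))) / Δ
      - (deriv u x₀ * φ x₀ + u x₀ * deriv φ x₀)
      = (u (x₀ + Δ / 2) * (7 * (φ (x₀ + Δ) + φ x₀) - (φ (x₀ + 2 * Δ) + φ (x₀ - Δ)))
        - u (x₀ - Δ / 2) * (7 * (φ x₀ + φ (x₀ - Δ)) - (φ (x₀ + Δ) + φ (x₀ - 2 * Δ)))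
        - 12 * (deriv u x₀ * φ x₀ + u x₀ * deriv φ x₀) * Δ) / (12 * Δ) := by
    field_simp
  rw [hkey]
  simp only [Real.norm_eq_abs] at hΔ ⊢
  rw [abs_div]
  have h12 : |12 * Δ| = 12 * Δ := abs_of_pos (by linarith)
  rw [h12]
  have hfin : |Δ ^ 3| = Δ ^ 3 := abs_of_pos (by positivity)
  rw [hfin] at hΔ
  calc _ ≤ C * Δ ^ 3 / (12 * Δ) := by
        apply div_le_div_of_nonneg_right hΔ
        linarith
      _ = C / 12 * |Δ ^ 2| := by
        rw [abs_of_pos (by positivity : (0:ℝ) < Δ ^ 2)]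
        field_simp
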